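/- Soundness of DmbCcl with respect to swap Kripke models: for every set of formulas Γ ∪ {φ} ⊆ For(Σ), if Γ ⊢_DmbCcl φ then Γ ⊨_DmbCcl φ. -/

import Mathlib

/-- Formulas over the signature Σ = {∧, ∨, →, ¬, ∘, O}, with countably many
propositional variables. -/
inductive Form : Type
  | var : ℕ → Form
  | and : Form → Form → Form
  | or : Form → Form → Form
  | imp : Form → Form → Form
  | neg : Form → Form
  | circ : Form → Form
  | obl : Form → Form

namespace Form
/-- ⊥_α := (α ∧ ¬α) ∧ ∘α -/
def bot (α : Form) : Form := (α.and α.neg).and α.circ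
end Form

/-- Theorems of DmbCcl: the DmbC axioms (CPL⁺, (EM), (bc), (O-K), (O-E)) plus the
da Costa axiom (cl) ¬(α ∧ ¬α) → ∘α, with Modus Ponens and O-necessitation. -/
inductive ThmDmbCcl : Form → Prop
  | A1 (α β : Form) : ThmDmbCcl (α.imp (β.imp α))
  | A2 (α β γ : Form) : ThmDmbCcl ((α.imp (β.imp γ)).imp ((α.imp β).imp (α.imp γ)))
  | A3 (α β : Form) : ThmDmbCcl (α.imp (β.imp (α.and β)))
  | A4 (α β : Form) : ThmDmbCcl ((α.and β).imp α)
  | A5 (α β : Form) : ThmDmbCcl ((α.and β).imp β)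
  | A6 (α β : Form) : ThmDmbCcl (α.imp (α.or β))
  | A7 (α β : Form) : ThmDmbCcl (β.imp (α.or β))
  | A8 (α β γ : Form) : ThmDmbCcl ((α.imp γ).imp ((β.imp γ).imp ((α.or β).imp γ)))
  | A9 (α β : Form) : ThmDmbCcl (((α.imp β).imp α).imp α)
  | EM (α : Form) : ThmDmbCcl (α.or α.neg)
  | bc (α β : Form) : ThmDmbCcl (α.circ.imp (α.imp (α.neg.imp β)))
  | cl (α : Form) : ThmDmbCcl ((α.and α.neg).neg.imp α.circ)
  | OK (α β : Form) : ThmDmbCcl ((α.imp β).obl.imp (α.obl.imp β.obl))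
  | OE (α : Form) : ThmDmbCcl (α.bot.obl.imp α.bot)
  | mp {α β : Form} : ThmDmbCcl (α.imp β) → ThmDmbCcl α → ThmDmbCcl β
  | nec {α : Form} : ThmDmbCcl α → ThmDmbCcl α.obl

/-- conj γ [γ₂,…,γ_k] = γ ∧ γ₂ ∧ … ∧ γ_k -/
def conj (γ : Form) : List Form → Form
  | [] => γ
  | δ :: l => γ.and (conj δ l)

/-- Γ ⊢_DmbCcl φ iff ⊢ φ or ⊢ (γ₁ ∧ … ∧ γ_k) → φ for some γ₁,…,γ_k ∈ Γ, k ≥ 1. -/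
def DerivDmbCcl (Γ : Set Form) (φ : Form) : Prop :=
  ThmDmbCcl φ ∨ ∃ (γ : Form) (l : List Form),
    (∀ δ ∈ γ :: l, δ ∈ Γ) ∧ ThmDmbCcl ((conj γ l).imp φ)

/-- The three snapshots T = (1,0), t = (1,1), F = (0,1). -/
inductive SV : Type
  | T | t | F
deriving DecidableEq

/-- First coordinate of a snapshot. -/
def SV.p1 : SV → Bool
  | .T => true | .t => true | .F => false

/-- Second coordinate of a snapshot. -/
def SV.p2 : SV → Bool
  | .T => false | .t => true | .F => true

/-- Designated values: D = {T, t}, i.e. first coordinate is 1. -/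
def SV.desig (a : SV) : Prop := a.p1 = true

/-- Swap Kripke model conditions for DmbCcl on a serial frame (W,R):
the DmbCciw conditions (with ∘ interpreted by ∘̃₁) plus the restriction
that v_w(α) = t implies v_w(α ∧ ¬α) = T. -/
structure IsModelDmbCcl {W : Type} (R : W → W → Prop) (v : W → Form → SV) : Prop where
  serial : ∀ w, ∃ w', R w w'
  and_ : ∀ w α β, (v w (α.and β)).p1 = ((v w α).p1 && (v w β).p1)
  or_ : ∀ w α β, (v w (α.or β)).p1 = ((v w α).p1 || (v w β).p1)
  imp_ : ∀ w α β, (v w (α.imp β)).p1 = (!(v w α).p1 || (v w β).p1)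
  neg_ : ∀ w α, (v w α.neg).p1 = (v w α).p2
  circ_ : ∀ w α, (v w α.circ).p1 = !((v w α).p1 && (v w α).p2)
  obl_ : ∀ w α, ((v w α.obl).p1 = true ↔ ∀ w', R w w' → (v w' α).p1 = true)
  cl_ : ∀ w α, v w α = SV.t → v w (α.and α.neg) = SV.T

/-- Γ ⊨_DmbCcl φ : semantic consequence over all swap Kripke models for DmbCcl. -/
def SemDmbCcl (Γ : Set Form) (φ : Form) : Prop :=
  ∀ (W : Type) (R : W → W → Prop) (v : W → Form → SV), Nonempty W →
    IsModelDmbCcl R v → ∀ w : W, (∀ γ ∈ Γ, (v w γ).desig) → (v w φ).desig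

lemma thm_valid {φ : Form} (h : ThmDmbCcl φ) :
    ∀ (W : Type) (R : W → W → Prop) (v : W → Form → SV),
      IsModelDmbCcl R v → ∀ w : W, (v w φ).p1 = true := by
  induction h with
  | A1 α β =>
      intro W R v M w
      simp [M.imp_]
      cases (v w α).p1 <;> cases (v w β).p1 <;> simp
  | A2 α β γ =>
      intro W R v M w
      simp [M.imp_]
      cases (v w α).p1 <;> cases (v w β).p1 <;> cases (v w γ).p1 <;> simp
  | A3 α β =>
      intro W R v M w
      simp [M.imp_, M.and_]
      cases (v w α).p1 <;> cases (v w β).p1 <;> simp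
  | A4 α β =>
      intro W R v M w
      simp [M.imp_, M.and_]
      cases (v w α).p1 <;> cases (v w β).p1 <;> simp
  | A5 α β =>
      intro W R v M w
      simp [M.imp_, M.and_]
      cases (v w α).p1 <;> cases (v w β).p1 <;> simp
  | A6 α β =>
      intro W R v M w
      simp [M.imp_, M.or_]
      cases (v w α).p1 <;> cases (v w β).p1 <;> simp
  | A7 α β =>
      intro W R v M w
      simp [M.imp_, M.or_]
      cases (v w α).p1 <;> cases (v w β).p1 <;> simp
  | A8 α β γ =>
      intro W R v M w
      simp [M.imp_, M.or_]
      cases (v w α).p1 <;> cases (v w β).p1 <;> cases (v w γ).p1 <;> simp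
  | A9 α β =>
      intro W R v M w
      simp [M.imp_]
      cases (v w α).p1 <;> cases (v w β).p1 <;> simp
  | EM α =>
      intro W R v M w
      simp [M.or_, M.neg_]
      cases hα : v w α <;> simp [SV.p1, SV.p2]
  | bc α β =>
      intro W R v M w
      simp [M.imp_, M.circ_, M.neg_]
      cases (v w α).p1 <;> cases (v w α).p2 <;> cases (v w β).p1 <;> simp
  | cl α =>
      intro W R v M w
      simp [M.imp_, M.neg_, M.circ_]
      cases h1 : (v w α).p1 <;> cases h2 : (v w α).p2 <;> simp
      have ht : v w α = SV.t := by
        cases hv : v w α <;> rw [hv] at h1 h2 <;> simp [SV.p1, SV.p2] at h1 h2 ⊢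
      have := M.cl_ w α ht
      rw [this]; simp [SV.p2]
  | OK α β =>
      intro W R v M w
      simp [M.imp_]
      cases h1 : (v w (α.imp β).obl).p1
      · simp
      · cases h2 : (v w α.obl).p1
        · simp
        · simp
          rw [M.obl_]
          intro w' hw'
          have hab := (M.obl_ w (α.imp β)).mp h1 w' hw'
          have ha := (M.obl_ w α).mp h2 w' hw'
          rw [M.imp_, ha] at hab
          simpa using hab
  | OE α =>
      intro W R v M w
      have hbot : ∀ w' : W, (v w' α.bot).p1 = false := by
        intro w'
        show (v w' ((α.and α.neg).and α.circ)).p1 = false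
        rw [M.and_, M.and_, M.neg_, M.circ_]
        cases (v w' α).p1 <;> cases (v w' α).p2 <;> simp
      rw [M.imp_]
      obtain ⟨w', hw'⟩ := M.serial w
      cases ho : (v w α.bot.obl).p1
      · simp
      · have := (M.obl_ w α.bot).mp ho w' hw'
        rw [hbot w'] at this; exact absurd this (by simp)
  | mp hab ha ihab iha =>
      intro W R v M w
      have h1 := ihab W R v M w
      have h2 := iha W R v M w
      rw [M.imp_, h2] at h1
      simpa using h1
  | nec h ih =>
      intro W R v M w
      rw [M.obl_]
      intro w' _
      exact ih W R v M w'

lemma conj_desig {W : Type} {R : W → W → Prop} {v : W → Form → SV}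
    (M : IsModelDmbCcl R v) (w : W) :
    ∀ (l : List Form) (γ : Form), (∀ δ ∈ γ :: l, (v w δ).p1 = true) →
      (v w (conj γ l)).p1 = true := by
  intro l
  induction l with
  | nil => intro γ h; exact h γ (by simp)
  | cons δ l ih =>
      intro γ h
      show (v w (γ.and (conj δ l))).p1 = true
      rw [M.and_, h γ (by simp), ih δ (fun x hx => h x (by simpa using Or.inr hx))]
      rfl

/-- Soundness of DmbCcl w.r.t. swap Kripke models. -/
theorem DmbCcl_soundness (Γ : Set Form) (φ : Form) :
    DerivDmbCcl Γ φ → SemDmbCcl Γ φ := by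
  rintro (h | ⟨γ, l, hmem, h⟩) W R v _ M w hΓ
  · exact thm_valid h W R v M w
  · have hc : (v w (conj γ l)).p1 = true :=
      conj_desig M w l γ (fun δ hδ => hΓ δ (hmem δ hδ))
    have h1 := thm_valid h W R v M w
    rw [M.imp_, hc] at h1
    simpa [SV.desig] using h1
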